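/- Define F̃(m,k) = ∑_{l=0}^{min(k,m)} (−1)^m · C(m,l) · C(k−l+m−1, k−m) for positive integers m ≤ k (and extend by the same formula). Then the first contracted generalized polarization tensor of two disks, M₁₁^{cc}(λ) = π α² ∑_{k=1}^∞ F̃(1,k)² · k·e^{−2ks}/(λ − (1/2)e^{−2ks}), has infinitely many distinct simple poles in λ, located exactly at the points λ = (1/2)e^{−2ks}, k = 1, 2, 3, …, since F̃(1,k) ≠ 0 for all k ≥ 1. -/

import Mathlib

open Filter Topology

/-- `F̃(m,k) = ∑_{l=0}^{min(k,m)} (−1)^m C(m,l) C(k−l+m−1, k−m)`. -/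
noncomputable def Ftil (m k : ℕ) : ℝ :=
  ∑ l ∈ Finset.range (min k m + 1),
    (-1 : ℝ) ^ m * (m.choose l) * ((k - l + m - 1).choose (k - m))

lemma Ftil_one_succ (n : ℕ) : Ftil 1 (n + 1) = -((n : ℝ) + 2) := by
  have hmin : min (n + 1) 1 = 1 := min_eq_right (by omega)
  have h1 : n + 1 - 0 + 1 - 1 = n + 1 := by omega
  have h2 : n + 1 - 1 + 1 - 1 = n := by omega
  simp only [Ftil, hmin]
  rw [Finset.sum_range_succ, Finset.sum_range_one, h1, h2]
  simp [Nat.choose_succ_self_right]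
  ring

set_option maxHeartbeats 1000000 in
theorem CGPT_two_disks_infinitely_many_poles (α s : ℝ) (hα : 0 < α) (hs : 0 < s) :
    (∀ k : ℕ, 1 ≤ k → Ftil 1 k ≠ 0) ∧
    Set.InjOn (fun k : ℕ => (1 / 2 : ℝ) * Real.exp (-2 * k * s)) {k : ℕ | 1 ≤ k} ∧
    (∀ k : ℕ, 1 ≤ k →
      Tendsto
        (fun lam : ℝ => (lam - (1 / 2) * Real.exp (-2 * k * s)) *
          (Real.pi * α ^ 2 * ∑' j : ℕ,
            (Ftil 1 (j + 1)) ^ 2 * ((j : ℝ) + 1) * Real.exp (-2 * ((j : ℝ) + 1) * s) /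
              (lam - (1 / 2) * Real.exp (-2 * ((j : ℝ) + 1) * s))))
        (𝓝[≠] ((1 / 2) * Real.exp (-2 * k * s)))
        (nhds (Real.pi * α ^ 2 * (Ftil 1 k) ^ 2 * k * Real.exp (-2 * k * s))) ∧
      Real.pi * α ^ 2 * (Ftil 1 k) ^ 2 * k * Real.exp (-2 * k * s) ≠ 0) := by
  -- basics about r = exp(-2s)
  set r : ℝ := Real.exp (-2 * s) with hrdef
  have hr0 : 0 < r := Real.exp_pos _
  have hr1 : r < 1 := Real.exp_lt_one_iff.mpr (by nlinarith)
  -- the pole locations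
  set μ : ℕ → ℝ := fun j => (1 / 2 : ℝ) * Real.exp (-2 * ((j : ℝ) + 1) * s) with hμdef
  have hμr : ∀ j : ℕ, μ j = (1 / 2 : ℝ) * r ^ (j + 1) := by
    intro j
    have : (-2 : ℝ) * ((j : ℝ) + 1) * s = ((j + 1 : ℕ) : ℝ) * (-2 * s) := by
      push_cast; ring
    simp only [hμdef, this, Real.exp_nat_mul, hrdef]
  have hμanti : StrictAnti μ := by
    intro i j hij
    rw [hμr, hμr]
    have := pow_lt_pow_right_of_lt_one₀ hr0 hr1 (by omega : i + 1 < j + 1)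
    linarith
  -- the numerators
  set c : ℕ → ℝ := fun j =>
    (Ftil 1 (j + 1)) ^ 2 * ((j : ℝ) + 1) * Real.exp (-2 * ((j : ℝ) + 1) * s) with hcdef
  have hcval : ∀ j : ℕ, c j = ((j : ℝ) + 2) ^ 2 * ((j : ℝ) + 1) * r ^ (j + 1) := by
    intro j
    have hexp : Real.exp (-2 * ((j : ℝ) + 1) * s) = r ^ (j + 1) := by
      have h := hμr j
      simp only [hμdef] at h
      linarith
    show (Ftil 1 (j + 1)) ^ 2 * ((j : ℝ) + 1) * Real.exp (-2 * ((j : ℝ) + 1) * s) = _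
    rw [Ftil_one_succ, hexp]; ring
  have hc0 : ∀ j : ℕ, 0 ≤ c j := by
    intro j
    rw [hcval]
    positivity
  -- summability of c
  have hcsum : Summable c := by
    have h3 : Summable (fun n : ℕ => (n : ℝ) ^ 3 * r ^ n) := by
      have := summable_pow_mul_geometric_of_norm_lt_one (R := ℝ) 3
        (r := r) (by rwa [Real.norm_eq_abs, abs_of_pos hr0])
      exact this
    have h4 : Summable (fun n : ℕ => ((n + 1 : ℕ) : ℝ) ^ 3 * r ^ (n + 1)) :=
      (summable_nat_add_iff 1).mpr h3
    have h5 : Summable (fun n : ℕ => 4 * (((n + 1 : ℕ) : ℝ) ^ 3 * r ^ (n + 1))) :=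
      h4.mul_left 4
    have hle : ∀ j : ℕ, c j ≤ 4 * (((j + 1 : ℕ) : ℝ) ^ 3 * r ^ (j + 1)) := by
      intro j
      rw [hcval]
      push_cast
      have h6 : (0:ℝ) ≤ r ^ (j + 1) := by positivity
      have h7 : ((j:ℝ) + 2) ^ 2 * ((j:ℝ) + 1) ≤ 4 * ((j:ℝ) + 1) ^ 3 := by
        have hx : (0:ℝ) ≤ (j:ℝ) := Nat.cast_nonneg j
        nlinarith [hx, sq_nonneg ((j:ℝ)), mul_nonneg hx hx]
      nlinarith [mul_le_mul_of_nonneg_right h7 h6]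
    exact Summable.of_nonneg_of_le hc0 hle h5
  refine ⟨?_, ?_, ?_⟩
  · rintro ⟨⟩ hk
    · omega
    · rename_i n
      rw [Ftil_one_succ]
      have : (0:ℝ) < (n:ℝ) + 2 := by positivity
      linarith
  · intro a ha b hb hab
    simp only at hab
    have : Real.exp (-2 * a * s) = Real.exp (-2 * b * s) := by linarith
    have h2 := Real.exp_injective this
    have : (a : ℝ) = b := by
      have hs' : s ≠ 0 := ne_of_gt hs
      have h3 : (-2 * s) * ((a:ℝ) - b) = 0 := by linear_combination h2
      rcases mul_eq_zero.mp h3 with h2 | h2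
      · exact absurd (by linarith : s = 0) hs'
      · linarith
    exact_mod_cast this
  · rintro ⟨⟩ hk
    · omega
    rename_i n
    -- pole location: (1/2) exp(-2 (n+1) s) = μ n
    have hcast : ((n + 1 : ℕ) : ℝ) = (n : ℝ) + 1 := by push_cast; ring
    have hpole : (1 / 2 : ℝ) * Real.exp (-2 * ((n + 1 : ℕ) : ℝ) * s) = μ n := by
      rw [hcast]
    constructor
    · -- the tendsto statement
      set δ : ℝ := (μ n - μ (n + 1)) / 2 with hδdef
      have hδ0 : 0 < δ := by
        have := hμanti (by omega : n < n + 1)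
        simp only [hδdef]; linarith
      -- separation lemma
      have hsep : ∀ lam : ℝ, |lam - μ n| < δ → ∀ j : ℕ, j ≠ n → δ ≤ |lam - μ j| := by
        intro lam hlam j hj
        rcases lt_or_gt_of_ne hj with hjn | hjn
        · -- j < n : μ j is far above μ n
          have hpow : r ^ n ≤ r ^ (j + 1) :=
            pow_le_pow_of_le_one hr0.le hr1.le (by omega)
          have hgap : 2 * δ ≤ μ j - μ n := by
            simp only [hδdef, hμr]
            have e1 : r ^ (n + 1) = r ^ n * r := pow_succ r n
            have e2 : r ^ (n + 1 + 1) = r ^ n * r * r := by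
              rw [pow_succ, e1]
            have hrn : (0:ℝ) ≤ r ^ n := by positivity
            have key : (0:ℝ) ≤ r ^ n * (1 - r) ^ 2 := mul_nonneg hrn (sq_nonneg _)
            rw [e2, e1]
            nlinarith [hpow, key]
          have := abs_lt.mp hlam
          calc δ ≤ (μ j - μ n) - δ := by linarith
            _ ≤ μ j - lam := by linarith
            _ ≤ |lam - μ j| := by rw [abs_sub_comm]; exact le_abs_self _
        · -- j > n : μ j ≤ μ (n+1)
          have hle : μ j ≤ μ (n + 1) := by
            rcases eq_or_lt_of_le (by omega : n + 1 ≤ j) with h | h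
            · rw [h]
            · exact (hμanti h).le
          have := abs_lt.mp hlam
          calc δ ≤ lam - μ j := by simp only [hδdef] at *; linarith
            _ ≤ |lam - μ j| := le_abs_self _
      -- rewrite the function
      have hfun : ∀ lam : ℝ,
          (lam - (1 / 2) * Real.exp (-2 * ((n + 1 : ℕ) : ℝ) * s)) *
            (Real.pi * α ^ 2 * ∑' j : ℕ, c j / (lam - μ j)) =
          Real.pi * α ^ 2 * ∑' j : ℕ, (lam - μ n) * (c j / (lam - μ j)) := by
        intro lam
        rw [hpole, tsum_mul_left]
        ring
      have hlim : Tendsto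
          (fun lam : ℝ => ∑' j : ℕ, (lam - μ n) * (c j / (lam - μ j)))
          (𝓝[≠] μ n) (𝓝 (c n)) := by
        have hg : (∑' j : ℕ, (if j = n then c n else 0)) = c n := tsum_ite_eq n (fun _ => c n)
        rw [← hg]
        apply tendsto_tsum_of_dominated_convergence (bound := c) hcsum
        · intro j
          by_cases hj : j = n
          · subst hj
            simp only [if_pos rfl]
            apply Tendsto.congr' _ (tendsto_const_nhds (x := c j))
            filter_upwards [self_mem_nhdsWithin] with lam hlam
            have hne : lam - μ j ≠ 0 := sub_ne_zero.mpr hlam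
            field_simp
          · simp only [if_neg hj]
            have hne : μ n - μ j ≠ 0 := sub_ne_zero.mpr (fun h => hj ((hμanti.injective h).symm))
            have t1 : Tendsto (fun lam : ℝ => lam - μ n) (𝓝[≠] μ n) (𝓝 0) := by
              have : Tendsto (fun lam : ℝ => lam - μ n) (𝓝 (μ n)) (𝓝 (μ n - μ n)) :=
                (continuous_id.sub continuous_const).tendsto _
              rw [sub_self] at this
              exact this.mono_left nhdsWithin_le_nhds
            have t2 : Tendsto (fun lam : ℝ => c j / (lam - μ j)) (𝓝[≠] μ n)
                (𝓝 (c j / (μ n - μ j))) := by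
              have : Tendsto (fun lam : ℝ => c j / (lam - μ j)) (𝓝 (μ n))
                  (𝓝 (c j / (μ n - μ j))) :=
                tendsto_const_nhds.div ((continuous_id.sub continuous_const).tendsto _) hne
              exact this.mono_left nhdsWithin_le_nhds
            have := t1.mul t2
            rwa [zero_mul] at this
        · have hball : ∀ᶠ lam in 𝓝[≠] μ n, |lam - μ n| < δ := by
            apply nhdsWithin_le_nhds
            have : Metric.ball (μ n) δ ∈ 𝓝 (μ n) := Metric.ball_mem_nhds _ hδ0
            filter_upwards [this] with lam hlam
            rwa [Metric.mem_ball, Real.dist_eq] at hlam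
          filter_upwards [hball, self_mem_nhdsWithin] with lam hlam hlam' j
          by_cases hj : j = n
          · subst hj
            have hne : lam - μ j ≠ 0 := sub_ne_zero.mpr hlam'
            rw [mul_comm, div_mul_cancel₀ _ hne, Real.norm_eq_abs,
              abs_of_nonneg (hc0 j)]
          · have hd : δ ≤ |lam - μ j| := hsep lam hlam j hj
            have hd0 : (0:ℝ) < |lam - μ j| := lt_of_lt_of_le hδ0 hd
            rw [Real.norm_eq_abs, abs_mul, abs_div, abs_of_nonneg (hc0 j)]
            calc |lam - μ n| * (c j / |lam - μ j|)
                ≤ |lam - μ j| * (c j / |lam - μ j|) := by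
                  apply mul_le_mul_of_nonneg_right (le_trans hlam.le hd) (by positivity)
              _ = c j := mul_div_cancel₀ _ (ne_of_gt hd0)
      have := (hlim.const_mul (Real.pi * α ^ 2)).congr (fun lam => (hfun lam).symm)
      convert this using 2
      · rw [hpole]
      · simp only [hcdef]
        push_cast
        ring
    · -- residue nonzero
      rw [Ftil_one_succ, neg_sq]
      push_cast
      have h1 : Real.pi > 0 := Real.pi_pos
      have h2 : Real.exp (-2 * ((n:ℝ)+1) * s) > 0 := Real.exp_pos _
      positivity
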